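/- arXiv:math/0702177 — 3 statements merged into one kernel-verified Lean document; each statement's English description precedes it below -/
import Mathlib

section
/- Let (W,S) be a Coxeter system with distinguished generator s_0. For every w ∈ W, ν(s_0 w) = ν(w) = ν(w s_0) = ℓ_{R∪R^{-1}}(τ(w)), where τ(w) is the unique element of {w, w s_0} in W^+. -/
open CoxeterSystem

namespace AltCox

variable {W : Type*} [Group W]

/-- Word length of `w` with respect to a generating set `A`:
the minimum length of a word in `A` whose product is `w`. -/
noncomputable def glen (A : Set W) (w : W) : ℕ :=
  sInf {k | ∃ l : List W, (∀ x ∈ l, x ∈ A) ∧ l.prod = w ∧ l.length = k}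

variable {n : ℕ} {M : CoxeterMatrix (Fin (n + 1))} (cs : CoxeterSystem M W)

/-- The alternating subgroup `W⁺`: the kernel of the sign character, i.e. the
set of elements of even Coxeter length. -/
def alt : Subgroup W where
  carrier := {w | Even (cs.length w)}
  one_mem' := by simp [Nat.even_iff]
  mul_mem' := by
    intro a b ha hb
    simp only [Set.mem_setOf_eq, Nat.even_iff] at *
    have := cs.length_mul_mod_two a b
    omega
  inv_mem' := by
    intro a ha
    simpa [cs.length_inv] using ha

/-- The generating set `R = {r_i = s₀ sᵢ : i ≠ 0}` of `W⁺`. -/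
def Rset : Set W := {x | ∃ i : Fin (n + 1), i ≠ 0 ∧ x = cs.simple 0 * cs.simple i}

/-- The symmetrized generating set `R ∪ R⁻¹`. -/
def Rsym : Set W := Rset cs ∪ (Rset cs)⁻¹

/-- `ν w`: the minimum number of letters different from `s₀` among all words
in the simple reflections whose product is `w`. -/
noncomputable def nu (w : W) : ℕ :=
  sInf {k | ∃ ω : List (Fin (n + 1)), cs.wordProd ω = w ∧
    (ω.filter (fun i => i ≠ 0)).length = k}

/-- `τ w` is the unique element of `{w, w s₀}` lying in `W⁺`. -/
noncomputable def tau (w : W) : W :=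
  if Even (cs.length w) then w else w * cs.simple 0

/-- `s₀` is evenly laced: `m₀ᵢ` is even or infinite (encoded by `0`) for all `i ≠ 0`. -/
def EvenlyLaced (M : CoxeterMatrix (Fin (n + 1))) : Prop :=
  ∀ i : Fin (n + 1), i ≠ 0 → Even (M 0 i)

/-- The set of all reflections of `(W, S)`. -/
def Tall : Set W := {t | cs.IsReflection t}

/-- The set `T̂` of reflections conjugate to some simple reflection other than `s₀`. -/
def That : Set W := {t | ∃ w : W, ∃ i : Fin (n + 1), i ≠ 0 ∧ t = w * cs.simple i * w⁻¹}

/-- The set of odd palindromes of `W⁺` with respect to `R`. -/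
def Palin : Set W :=
  {p | ∃ l : List W, (∀ x ∈ l, x ∈ Rsym cs) ∧ Odd l.length ∧ l.reverse = l ∧ l.prod = p}

/-- The set of left-shortening palindromes of `w`. -/
noncomputable def PL (w : W) : Set W :=
  {p ∈ Palin cs | glen (Rsym cs) (p * w) < glen (Rsym cs) w}

/-- The set of right-shortening palindromes of `w`. -/
noncomputable def PR (w : W) : Set W :=
  {p ∈ Palin cs | glen (Rsym cs) (w * p) < glen (Rsym cs) w}

/-- The right weak order on `(W⁺, R)`. -/
noncomputable def rweak (u w : W) : Prop :=
  Relation.ReflTransGen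
    (fun a b => ∃ r ∈ Rsym cs, b = a * r ∧
      glen (Rsym cs) b = glen (Rsym cs) a + 1) u w

/-- The left weak order on `(W⁺, R)`. -/
noncomputable def lweak (u w : W) : Prop :=
  Relation.ReflTransGen
    (fun a b => ∃ r ∈ Rsym cs, b = r * a ∧
      glen (Rsym cs) b = glen (Rsym cs) a + 1) u w

/-- The right strong order on `(W⁺, R)`. -/
noncomputable def rstrong (u w : W) : Prop :=
  Relation.ReflTransGen
    (fun a b => ∃ p ∈ Palin cs, b = a * p ∧
      glen (Rsym cs) a < glen (Rsym cs) b) u w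

/-- The left strong order on `(W⁺, R)`. -/
noncomputable def lstrong (u w : W) : Prop :=
  Relation.ReflTransGen
    (fun a b => ∃ p ∈ Palin cs, b = p * a ∧
      glen (Rsym cs) a < glen (Rsym cs) b) u w

/-- The strong Bruhat order on a Coxeter system. -/
noncomputable def bruhatLE {B : Type*} {M' : CoxeterMatrix B} {W' : Type*} [Group W']
    (cs' : CoxeterSystem M' W') (u w : W') : Prop :=
  Relation.ReflTransGen
    (fun a b => ∃ t, cs'.IsReflection t ∧ b = a * t ∧ cs'.length a < cs'.length b) u w

/-- The right weak order of a Coxeter system. -/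
noncomputable def coxRweak {B : Type*} {M' : CoxeterMatrix B} {W' : Type*} [Group W']
    (cs' : CoxeterSystem M' W') (u w : W') : Prop :=
  Relation.ReflTransGen
    (fun a b => ∃ i, b = a * cs'.simple i ∧ cs'.length b = cs'.length a + 1) u w

/-- The standard parabolic subgroup `W_J` for `J ⊆ S`. -/
def parabolic (J : Set (Fin (n + 1))) : Subgroup W :=
  Subgroup.closure (cs.simple '' J)

/-- The image `τ(J) = {s₀ sᵢ : sᵢ ∈ J, i ≠ 0}` of a subset `J ⊆ S` containing `s₀`. -/
def tauSet (J : Set (Fin (n + 1))) : Set W :=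
  {x | ∃ i ∈ J, i ≠ 0 ∧ x = cs.simple 0 * cs.simple i}

/-- The set `W^J` of minimum-length coset representatives for `W/W_J`. -/
def minReps (J : Set (Fin (n + 1))) : Set W :=
  {w | ∀ i ∈ J, cs.length w < cs.length (w * cs.simple i)}


/-- The set defining `nu` is invariant under left multiplication by `s₀`. -/
lemma nu_set_subset (w : W) :
    {k | ∃ ω : List (Fin (n + 1)), cs.wordProd ω = w ∧
      (ω.filter (fun i => i ≠ 0)).length = k} ⊆
    {k | ∃ ω : List (Fin (n + 1)), cs.wordProd ω = cs.simple 0 * w ∧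
      (ω.filter (fun i => i ≠ 0)).length = k} := by
  rintro k ⟨ω, hprod, hlen⟩
  exact ⟨0 :: ω, by rw [cs.wordProd_cons, hprod], by simpa using hlen⟩

lemma nu_simple_mul (w : W) : nu cs (cs.simple 0 * w) = nu cs w := by
  unfold nu
  congr 1
  apply Set.Subset.antisymm
  · have := nu_set_subset cs (cs.simple 0 * w)
    simpa [cs.simple_mul_simple_cancel_left] using this
  · exact nu_set_subset cs w

lemma nu_set_subset_right (w : W) :
    {k | ∃ ω : List (Fin (n + 1)), cs.wordProd ω = w ∧
      (ω.filter (fun i => i ≠ 0)).length = k} ⊆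
    {k | ∃ ω : List (Fin (n + 1)), cs.wordProd ω = w * cs.simple 0 ∧
      (ω.filter (fun i => i ≠ 0)).length = k} := by
  rintro k ⟨ω, hprod, hlen⟩
  refine ⟨ω ++ [0], ?_, ?_⟩
  · rw [cs.wordProd_append, hprod, cs.wordProd_singleton]
  · simpa using hlen

lemma nu_mul_simple (w : W) : nu cs (w * cs.simple 0) = nu cs w := by
  unfold nu
  congr 1
  apply Set.Subset.antisymm
  · have := nu_set_subset_right cs (w * cs.simple 0)
    simpa [cs.simple_mul_simple_cancel_right] using this
  · exact nu_set_subset_right cs w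

/-- Expansion: a word in `Rsym` gives a word in the simples. -/
lemma expand_Rsym : ∀ l : List W, (∀ x ∈ l, x ∈ Rsym cs) →
    ∃ ω : List (Fin (n + 1)), cs.wordProd ω = l.prod ∧
      (ω.filter (fun i => i ≠ 0)).length = l.length := by
  intro l
  induction l with
  | nil => exact fun _ => ⟨[], by simp, by simp⟩
  | cons x l' ih =>
    intro hmem
    obtain ⟨ω', hprod', hlen'⟩ := ih (fun y hy => hmem y (List.mem_cons_of_mem _ hy))
    rcases hmem x List.mem_cons_self with ⟨i, hi, hx⟩ | hx
    · refine ⟨0 :: i :: ω', ?_, ?_⟩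
      · rw [cs.wordProd_cons, cs.wordProd_cons, hprod', hx, List.prod_cons, mul_assoc]
      · simp only [List.filter_cons, List.length_cons]
        rw [if_neg (by simp), if_pos (by simp [hi]), List.length_cons]
        simpa using hlen'
    · rw [Set.mem_inv] at hx
      rcases hx with ⟨i, hi, hx⟩
      have hx' : x = cs.simple i * cs.simple 0 := by
        have : x⁻¹ = cs.simple 0 * cs.simple i := hx
        rw [← inv_inv x, this, mul_inv_rev, cs.inv_simple, cs.inv_simple]
      refine ⟨i :: 0 :: ω', ?_, ?_⟩
      · rw [cs.wordProd_cons, cs.wordProd_cons, hprod', hx', List.prod_cons, mul_assoc]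
      · simp only [List.filter_cons, List.length_cons]
        rw [if_pos (by simp [hi]), if_neg (by simp), List.length_cons]
        simpa using hlen'

/-- Contraction: a word in the simples with even-length product gives a word in `Rsym`. -/
lemma contract_to_Rsym : ∀ N : ℕ, ∀ ω : List (Fin (n + 1)),
    2 * (ω.filter (fun i => i ≠ 0)).length + ω.length ≤ N →
    Even (cs.length (cs.wordProd ω)) →
    ∃ l : List W, (∀ x ∈ l, x ∈ Rsym cs) ∧ l.prod = cs.wordProd ω ∧
      l.length = (ω.filter (fun i => i ≠ 0)).length := by
  intro N
  induction N with
  | zero =>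
    intro ω hN _
    have : ω = [] := List.eq_nil_of_length_eq_zero (by omega)
    subst this
    exact ⟨[], by simp, by simp, by simp⟩
  | succ N ih =>
    intro ω hN heven
    match ω with
    | [] => exact ⟨[], by simp, by simp, by simp⟩
    | j :: ω₁ =>
      by_cases hj : j = 0
      · subst hj
        match ω₁ with
        | [] =>
          exfalso
          rw [cs.wordProd_cons, cs.wordProd_nil, mul_one, cs.length_simple] at heven
          simp [Nat.even_iff] at heven
        | k :: ω₂ =>
          by_cases hk : k = 0
          · subst hk
            have hprod : cs.wordProd (0 :: 0 :: ω₂) = cs.wordProd ω₂ := by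
              rw [cs.wordProd_cons, cs.wordProd_cons, cs.simple_mul_simple_cancel_left]
            rw [hprod] at heven
            obtain ⟨l, h1, h2, h3⟩ := ih ω₂ (by simp at hN ⊢; omega) heven
            exact ⟨l, h1, by rw [h2, hprod], by simpa using h3⟩
          · -- ω = 0 :: k :: ω₂, k ≠ 0
            have hprod : cs.wordProd (0 :: k :: ω₂) =
                (cs.simple 0 * cs.simple k) * cs.wordProd ω₂ := by
              rw [cs.wordProd_cons, cs.wordProd_cons, mul_assoc]
            have heven₂ : Even (cs.length (cs.wordProd ω₂)) := by
              have h2 := cs.length_mul_mod_two (cs.simple 0 * cs.simple k) (cs.wordProd ω₂)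
              have h3 := cs.length_mul_mod_two (cs.simple 0) (cs.simple k)
              rw [cs.length_simple, cs.length_simple] at h3
              rw [hprod] at heven
              rw [Nat.even_iff] at heven ⊢
              omega
            obtain ⟨l, h1, h2, h3⟩ := ih ω₂ (by simp [hk] at hN ⊢; omega) heven₂
            refine ⟨(cs.simple 0 * cs.simple k) :: l, ?_, ?_, ?_⟩
            · rintro x hx
              rcases List.mem_cons.mp hx with rfl | hx
              · exact Or.inl ⟨k, hk, rfl⟩
              · exact h1 x hx
            · rw [List.prod_cons, h2, hprod]
            · simp [hk, h3]
      · -- ω = j :: ω₁, j ≠ 0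
        have hprod : cs.wordProd (j :: ω₁) =
            (cs.simple j * cs.simple 0) * cs.wordProd (0 :: ω₁) := by
          rw [cs.wordProd_cons, cs.wordProd_cons, ← mul_assoc,
            cs.simple_mul_simple_cancel_right]
        have heven₂ : Even (cs.length (cs.wordProd (0 :: ω₁))) := by
          have h2 := cs.length_mul_mod_two (cs.simple j * cs.simple 0) (cs.wordProd (0 :: ω₁))
          have h3 := cs.length_mul_mod_two (cs.simple j) (cs.simple 0)
          rw [cs.length_simple, cs.length_simple] at h3
          rw [hprod] at heven
          rw [Nat.even_iff] at heven ⊢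
          omega
        obtain ⟨l, h1, h2, h3⟩ := ih (0 :: ω₁) (by simp [hj] at hN ⊢; omega) heven₂
        refine ⟨(cs.simple j * cs.simple 0) :: l, ?_, ?_, ?_⟩
        · rintro x hx
          rcases List.mem_cons.mp hx with rfl | hx
          · refine Or.inr ?_
            rw [Set.mem_inv, mul_inv_rev, cs.inv_simple, cs.inv_simple]
            exact ⟨j, hj, rfl⟩
          · exact h1 x hx
        · rw [List.prod_cons, h2, hprod]
        · simp [hj] at h3 ⊢; omega

lemma glen_eq_nu_of_even {u : W} (hu : Even (cs.length u)) :
    glen (Rsym cs) u = nu cs u := by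
  obtain ⟨ω₀, _, hω₀⟩ := cs.exists_reduced_word u
  have hnumem : nu cs u ∈ {k | ∃ ω : List (Fin (n + 1)), cs.wordProd ω = u ∧
      (ω.filter (fun i => i ≠ 0)).length = k} :=
    Nat.sInf_mem ⟨_, ω₀, hω₀.symm, rfl⟩
  obtain ⟨ω, hωprod, hωlen⟩ := hnumem
  have hcontract := contract_to_Rsym cs
    (2 * (ω.filter (fun i => i ≠ 0)).length + ω.length) ω le_rfl (hωprod ▸ hu)
  obtain ⟨l, hl1, hl2, hl3⟩ := hcontract
  apply le_antisymm
  · exact Nat.sInf_le ⟨l, hl1, by rw [hl2, hωprod], by rw [hl3, hωlen]⟩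
  · have hglenmem : glen (Rsym cs) u ∈ {k | ∃ l : List W, (∀ x ∈ l, x ∈ Rsym cs) ∧
        l.prod = u ∧ l.length = k} :=
      Nat.sInf_mem ⟨_, l, hl1, by rw [hl2, hωprod], rfl⟩
    obtain ⟨l', hl'1, hl'2, hl'3⟩ := hglenmem
    obtain ⟨ω', hω'1, hω'2⟩ := expand_Rsym cs l' hl'1
    exact Nat.sInf_le ⟨ω', by rw [hω'1, hl'2], by rw [hω'2, hl'3]⟩

/-- For every `w ∈ W`: `ν(s₀ w) = ν(w) = ν(w s₀) = ℓ_{R ∪ R⁻¹}(τ(w))`. -/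
theorem statement5 (w : W) :
    nu cs (cs.simple 0 * w) = nu cs w ∧
    nu cs (w * cs.simple 0) = nu cs w ∧
    glen (Rsym cs) (tau cs w) = nu cs w := by
  refine ⟨nu_simple_mul cs w, nu_mul_simple cs w, ?_⟩
  unfold tau
  by_cases hw : Even (cs.length w)
  · rw [if_pos hw, glen_eq_nu_of_even cs hw]
  · rw [if_neg hw]
    have heven : Even (cs.length (w * cs.simple 0)) := by
      have := cs.length_mul_mod_two w (cs.simple 0)
      rw [cs.length_simple] at this
      rw [Nat.even_iff] at *
      omega
    rw [glen_eq_nu_of_even cs heven, nu_mul_simple cs w]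

end AltCox
end

section
/- Let (W,S) be a Coxeter system with distinguished generator s_0. If w < w' in the strong Bruhat order on W, then ν(w) ≤ ν(w'). In particular, for w, w' ∈ W^+, w < w' in Bruhat order implies ℓ_{R∪R^{-1}}(w) ≤ ℓ_{R∪R^{-1}}(w'). -/
open CoxeterSystem

namespace AltCox

variable {W : Type*} [Group W]

variable {n : ℕ} {M : CoxeterMatrix (Fin (n + 1))} (cs : CoxeterSystem M W)

section StrongExchange

variable {Bb : Type*} {Mm : CoxeterMatrix Bb} (cox : CoxeterSystem Mm W)

local prefix:100 "s" => cox.simple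
local prefix:100 "π" => cox.wordProd
local prefix:100 "ℓ" => cox.length

/-- A simple helper: conjugation equation for involutions. -/
theorem conj_eq_iff {a b x y : W} (ha : a * a = 1) (hb : b * b = 1) :
    a * x * b = y ↔ x = a * y * b := by
  constructor
  · rintro rfl
    have : a * (a * x * b) * b = (a * a) * (x * (b * b)) := by group
    rw [this, ha, hb]; simp
  · rintro rfl
    have : a * (a * y * b) * b = (a * a) * (y * (b * b)) := by group
    rw [this, ha, hb]; simp

open Classical in
/-- The underlying function of the permutation `η i` of `W × ZMod 2`. -/
noncomputable def etaF (i : Bb) : W × ZMod 2 → W × ZMod 2 :=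
  fun x => (s i * x.1 * s i, x.2 + if x.1 = s i then 1 else 0)

theorem etaF_involutive (i : Bb) : Function.Involutive (etaF cox i) := by
  classical
  rintro ⟨t, ε⟩
  simp only [etaF]
  have hss := cox.simple_mul_simple_self i
  have h1 : s i * (s i * t * s i) * s i = t := by
    have : s i * (s i * t * s i) * s i = (s i * s i) * (t * (s i * s i)) := by group
    rw [this, hss]; simp
  have h2 : (s i * t * s i = s i) ↔ t = s i := by
    rw [conj_eq_iff hss hss]
    constructor
    · intro h; rw [h]; rw [show s i * s i * s i = (s i * s i) * s i from rfl, hss, one_mul]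
    · intro h; rw [h, hss, one_mul]
  have h11 : (1 : ZMod 2) + 1 = 0 := by decide
  rw [h1]
  simp only [h2]
  by_cases ht : t = s i
  · simp [ht, add_assoc, h11]
  · simp [ht]

/-- The permutation `η i` of `W × ZMod 2`. -/
noncomputable def eta (i : Bb) : Equiv.Perm (W × ZMod 2) :=
  (etaF_involutive cox i).toPerm

@[simp] theorem eta_apply (i : Bb) (x : W × ZMod 2) : eta cox i x = etaF cox i x := rfl


theorem conj_eq_iff' (c x y : W) : c * x * c⁻¹ = y ↔ x = c⁻¹ * y * c := by
  constructor
  · rintro rfl; group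
  · rintro rfl; group

open Classical in
theorem eta_mul_pow_apply (i i' : Bb) (k : ℕ) (t : W) (ε : ZMod 2) :
    ((eta cox i * eta cox i') ^ k) (t, ε) =
      ((s i * s i') ^ k * t * ((s i * s i')⁻¹) ^ k,
        ε + ∑ j ∈ Finset.range (2 * k),
          if t = ((s i * s i')⁻¹) ^ j * s i' then (1 : ZMod 2) else 0) := by
  classical
  induction k generalizing t ε with
  | zero => simp
  | succ k ih =>
    have hi := cox.simple_mul_simple_self i
    have hi' := cox.simple_mul_simple_self i'
    set c : W := s i * s i' with hc
    have hic : s i' * c = c⁻¹ * s i' := by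
      rw [hc, mul_inv_rev, cox.inv_simple, cox.inv_simple]; group
    have happ : (eta cox i * eta cox i') (t, ε) =
        (c * t * c⁻¹, ε + ((if t = c⁻¹ ^ 0 * s i' then (1 : ZMod 2) else 0) +
          if t = c⁻¹ ^ 1 * s i' then 1 else 0)) := by
      rw [Equiv.Perm.mul_apply]
      simp only [eta_apply, etaF]
      have e1 : s i * (s i' * t * s i') * s i = c * t * c⁻¹ := by
        rw [hc, mul_inv_rev, cox.inv_simple, cox.inv_simple]; group
      have e2 : (s i' * t * s i' = s i) ↔ (t = c⁻¹ ^ 1 * s i') := by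
        rw [conj_eq_iff hi' hi', hc, mul_inv_rev, cox.inv_simple, cox.inv_simple, pow_one]
      have e3 : (t = s i') ↔ (t = c⁻¹ ^ 0 * s i') := by rw [pow_zero, one_mul]
      simp only [e1, e2, e3, add_assoc]
    rw [pow_succ, Equiv.Perm.mul_apply, happ, ih]
    have comp1 : c ^ k * (c * t * c⁻¹) * (c⁻¹) ^ k = c ^ (k + 1) * t * (c⁻¹) ^ (k + 1) := by
      rw [pow_succ c k, pow_succ' c⁻¹ k]
      simp [mul_assoc]
    have hterm : ∀ j : ℕ, (if c * t * c⁻¹ = c⁻¹ ^ j * s i' then (1 : ZMod 2) else 0)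
        = if t = c⁻¹ ^ (j + 1 + 1) * s i' then 1 else 0 := by
      intro j
      have hcond : (c * t * c⁻¹ = c⁻¹ ^ j * s i') ↔ (t = c⁻¹ ^ (j + 1 + 1) * s i') := by
        rw [conj_eq_iff']
        have : c⁻¹ * (c⁻¹ ^ j * s i') * c = c⁻¹ ^ (j + 1 + 1) * s i' := by
          have h1 : s i' * c = c⁻¹ * s i' := hic
          calc c⁻¹ * (c⁻¹ ^ j * s i') * c = c⁻¹ * c⁻¹ ^ j * (s i' * c) := by
                simp [mul_assoc]
            _ = c⁻¹ * c⁻¹ ^ j * (c⁻¹ * s i') := by rw [h1]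
            _ = (c⁻¹ * c⁻¹ ^ j * c⁻¹) * s i' := by simp [mul_assoc]
            _ = c⁻¹ ^ (j + 1 + 1) * s i' := by
                rw [pow_succ, pow_succ']
        rw [this]
      simp only [hcond]
    rw [Finset.sum_congr rfl (fun j _ => hterm j)]
    have hsplit : ∑ j ∈ Finset.range (2 * (k + 1)),
        (if t = c⁻¹ ^ j * s i' then (1 : ZMod 2) else 0)
        = (if t = c⁻¹ ^ 0 * s i' then (1 : ZMod 2) else 0)
          + ((if t = c⁻¹ ^ 1 * s i' then (1 : ZMod 2) else 0)
          + ∑ j ∈ Finset.range (2 * k), if t = c⁻¹ ^ (j + 1 + 1) * s i' then (1 : ZMod 2) else 0) := by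
      rw [show 2 * (k + 1) = (2 * k + 1) + 1 by ring, Finset.sum_range_succ' _ (2 * k + 1),
        Finset.sum_range_succ' _ (2 * k)]
      ring
    rw [comp1, hsplit]
    rw [Prod.mk.injEq]
    refine ⟨rfl, by ring⟩

theorem eta_liftable : Mm.IsLiftable (eta cox) := by
  classical
  intro i i'
  apply Equiv.ext
  rintro ⟨t, ε⟩
  rw [eta_mul_pow_apply]
  have hpow := cox.simple_mul_simple_pow i i'
  have hpow' : ((s i * s i')⁻¹) ^ Mm i i' = 1 := by
    rw [inv_pow, hpow, inv_one]
  have hsum : ∑ j ∈ Finset.range (2 * Mm i i'),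
      (if t = ((s i * s i')⁻¹) ^ j * s i' then (1 : ZMod 2) else 0) = 0 := by
    rw [two_mul, Finset.sum_range_add]
    have : ∀ j : ℕ, (if t = ((s i * s i')⁻¹) ^ (Mm i i' + j) * s i' then (1 : ZMod 2) else 0)
        = if t = ((s i * s i')⁻¹) ^ j * s i' then (1 : ZMod 2) else 0 := by
      intro j
      rw [pow_add, hpow', one_mul]
    rw [Finset.sum_congr rfl (fun j _ => this j)]
    generalize (∑ j ∈ Finset.range (Mm i i'),
      if t = ((s i * s i')⁻¹) ^ j * s i' then (1 : ZMod 2) else 0) = a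
    revert a; decide
  rw [hpow, hpow', hsum, one_mul, mul_one, add_zero]
  rfl

/-- The parity homomorphism into permutations of `W × ZMod 2`. -/
noncomputable def phi : W →* Equiv.Perm (W × ZMod 2) :=
  cox.lift ⟨eta cox, eta_liftable cox⟩

@[simp] theorem phi_simple (i : Bb) : phi cox (s i) = eta cox i :=
  cox.lift_apply_simple (eta_liftable cox) i

open Classical in
/-- Count mod 2 of occurrences of `t` in a list. -/
noncomputable def lcount (t : W) (l : List W) : ZMod 2 :=
  (l.map (fun z => if t = z then (1 : ZMod 2) else 0)).sum

open Classical in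
theorem lcount_cons (t a : W) (l : List W) :
    lcount t (a :: l) = (if t = a then (1 : ZMod 2) else 0) + lcount t l := by
  simp [lcount]

open Classical in
theorem lcount_ne_zero_mem {t : W} {l : List W} (h : lcount t l ≠ 0) : t ∈ l := by
  induction l with
  | nil => exact absurd rfl h
  | cons a l ih =>
    rw [lcount_cons] at h
    by_cases hta : t = a
    · exact hta ▸ List.mem_cons_self (a := a) (l := l)
    · rw [if_neg hta, zero_add] at h
      exact List.mem_cons_of_mem a (ih h)

theorem ris_cons (i : Bb) (ω : List Bb) :
    cox.rightInvSeq (i :: ω) = ((π ω)⁻¹ * s i * π ω) :: cox.rightInvSeq ω := rfl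

open Classical in
theorem phi_wordProd (ω : List Bb) (t : W) (ε : ZMod 2) :
    phi cox (π ω) (t, ε) = (π ω * t * (π ω)⁻¹, ε + lcount t (cox.rightInvSeq ω)) := by
  induction ω generalizing t ε with
  | nil => simp [lcount, wordProd_nil, rightInvSeq]
  | cons i ω ih =>
    rw [wordProd_cons, map_mul, Equiv.Perm.mul_apply, ih, phi_simple, eta_apply]
    simp only [etaF]
    rw [ris_cons, lcount_cons]
    have e1 : s i * (π ω * t * (π ω)⁻¹) * s i = (s i * π ω) * t * ((s i * π ω))⁻¹ := by
      rw [mul_inv_rev, cox.inv_simple]; group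
    have e2 : (π ω * t * (π ω)⁻¹ = s i) ↔ (t = (π ω)⁻¹ * s i * π ω) := by
      rw [conj_eq_iff']
    rw [Prod.mk.injEq]
    refine ⟨e1, ?_⟩
    simp only [e2]
    ring

/-- `η(w, t)`: the parity of the number of occurrences of `t` in the right
inversion sequence of any word for `w`. -/
noncomputable def etaW (w t : W) : ZMod 2 := (phi cox w (t, 0)).2

theorem etaW_eq_lcount (ω : List Bb) (t : W) :
    etaW cox (π ω) t = lcount t (cox.rightInvSeq ω) := by
  rw [etaW, phi_wordProd]; simp

theorem phi_apply (w t : W) (ε : ZMod 2) :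
    phi cox w (t, ε) = (w * t * w⁻¹, ε + etaW cox w t) := by
  obtain ⟨ω, rfl⟩ := cox.wordProd_surjective w
  rw [phi_wordProd, etaW_eq_lcount]

theorem etaW_mul (u v t : W) :
    etaW cox (u * v) t = etaW cox v t + etaW cox u (v * t * v⁻¹) := by
  rw [etaW, map_mul, Equiv.Perm.mul_apply, phi_apply, phi_apply]
  simp

theorem etaW_one (t : W) : etaW cox 1 t = 0 := by
  rw [etaW, map_one]; rfl

open Classical in
theorem etaW_simple (i : Bb) (t : W) :
    etaW cox (s i) t = if t = s i then 1 else 0 := by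
  rw [etaW, phi_simple, eta_apply]
  simp [etaF]

theorem etaW_inv (u t : W) : etaW cox u⁻¹ (u * t * u⁻¹) = etaW cox u t := by
  have h := etaW_mul cox u⁻¹ u t
  rw [inv_mul_cancel, etaW_one] at h
  have : ∀ a b : ZMod 2, 0 = a + b → b = a := by decide
  exact this _ _ h

theorem etaW_refl {t : W} (ht : cox.IsReflection t) : etaW cox t t = 1 := by
  obtain ⟨u, i, rfl⟩ := ht
  classical
  have h1 : etaW cox (u * s i * u⁻¹) (u * s i * u⁻¹)
      = etaW cox u⁻¹ (u * s i * u⁻¹) + etaW cox (u * s i) (s i) := by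
    have := etaW_mul cox (u * s i) u⁻¹ (u * s i * u⁻¹)
    rw [show u⁻¹ * (u * s i * u⁻¹) * u⁻¹⁻¹ = s i by group] at this
    exact this
  have h2 : etaW cox (u * s i) (s i) = 1 + etaW cox u (s i) := by
    have := etaW_mul cox u (s i) (s i)
    rw [show s i * s i * (s i)⁻¹ = s i by group, etaW_simple, if_pos rfl] at this
    exact this
  have h3 : etaW cox u⁻¹ (u * s i * u⁻¹) = etaW cox u (s i) := etaW_inv cox u (s i)
  rw [h1, h2, h3]
  generalize etaW cox u (s i) = a
  revert a; decide

theorem length_mul_lt_of_etaW_eq_one {w t : W} (ht : cox.IsReflection t)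
    (h : etaW cox w t = 1) : ℓ (w * t) < ℓ w := by
  obtain ⟨ω, hred, rfl⟩ := cox.exists_reduced_word' w
  rw [etaW_eq_lcount] at h
  have hne : lcount t (cox.rightInvSeq ω) ≠ 0 := by rw [h]; decide
  exact (cox.isRightInversion_of_mem_rightInvSeq hred (lcount_ne_zero_mem hne)).2

theorem etaW_eq_one_of_length_mul_lt {w t : W} (ht : cox.IsReflection t)
    (h : ℓ (w * t) < ℓ w) : etaW cox w t = 1 := by
  by_contra hne
  have h0 : etaW cox w t = 0 := by
    revert hne; generalize etaW cox w t = a; revert a; decide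
  have h1 : etaW cox (w * t) t = 1 := by
    rw [etaW_mul, etaW_refl cox ht, show t * t * t⁻¹ = t by group, h0]
    decide
  have h2 : ℓ (w * t * t) < ℓ (w * t) := length_mul_lt_of_etaW_eq_one cox ht h1
  rw [mul_assoc, ht.mul_self, mul_one] at h2
  omega

/-- The strong exchange property. -/
theorem strong_exchange (ω : List Bb) {t : W} (ht : cox.IsReflection t)
    (hlt : ℓ (π ω * t) < ℓ (π ω)) :
    ∃ j < ω.length, π (ω.eraseIdx j) = π ω * t := by
  have h1 : etaW cox (π ω) t = 1 := etaW_eq_one_of_length_mul_lt cox ht hlt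
  rw [etaW_eq_lcount] at h1
  have hne : lcount t (cox.rightInvSeq ω) ≠ 0 := by rw [h1]; decide
  obtain ⟨j, hj, hjt⟩ := List.mem_iff_getElem.mp (lcount_ne_zero_mem hne)
  have hj' : j < ω.length := by
    have := cox.length_rightInvSeq ω
    omega
  refine ⟨j, hj', ?_⟩
  have h2 := cox.wordProd_mul_getD_rightInvSeq ω j
  rw [List.getD_eq_getElem _ _ hj, hjt] at h2
  exact h2.symm



end StrongExchange

theorem nu_set_nonempty (w : W) :
    {k | ∃ ω : List (Fin (n + 1)), cs.wordProd ω = w ∧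
      (ω.filter (fun i => i ≠ 0)).length = k}.Nonempty := by
  obtain ⟨ω, rfl⟩ := cs.wordProd_surjective w
  exact ⟨_, ω, rfl, rfl⟩

theorem nu_spec (w : W) : ∃ ω : List (Fin (n + 1)), cs.wordProd ω = w ∧
    (ω.filter (fun i => i ≠ 0)).length = nu cs w :=
  Nat.sInf_mem (nu_set_nonempty cs w)

theorem nu_le (w : W) (ω : List (Fin (n + 1))) (h : cs.wordProd ω = w) :
    nu cs w ≤ (ω.filter (fun i => i ≠ 0)).length :=
  Nat.sInf_le ⟨ω, h, rfl⟩

theorem nu_le_of_mul_reflection {a b t : W} (ht : cs.IsReflection t) (hb : b = a * t)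
    (hlen : cs.length a < cs.length b) : nu cs a ≤ nu cs b := by
  obtain ⟨ω, hω, hcnt⟩ := nu_spec cs b
  have hab : a = b * t := by
    rw [hb, mul_assoc, ht.mul_self, mul_one]
  have hlt : cs.length (cs.wordProd ω * t) < cs.length (cs.wordProd ω) := by
    rw [hω, ← hab]; exact hlen
  obtain ⟨j, hj, hπ⟩ := strong_exchange cs ω ht hlt
  rw [hω, ← hab] at hπ
  calc nu cs a ≤ ((ω.eraseIdx j).filter (fun i => i ≠ 0)).length := nu_le cs a _ hπ
    _ ≤ (ω.filter (fun i => i ≠ 0)).length := ((ω.eraseIdx_sublist j).filter _).length_le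
    _ = nu cs b := hcnt

theorem nu_mono {u w : W} (h : bruhatLE cs u w) : nu cs u ≤ nu cs w := by
  induction h with
  | refl => exact le_refl _
  | tail h₁ h₂ ih =>
    obtain ⟨t, ht, hbc, hlen⟩ := h₂
    exact le_trans ih (nu_le_of_mul_reflection cs ht hbc hlen)

theorem length_wordProd_mod_two (ω : List (Fin (n + 1))) :
    cs.length (cs.wordProd ω) % 2 = ω.length % 2 := by
  induction ω with
  | nil => simp [cs.wordProd_nil, cs.length_one]
  | cons i ω ih =>
    rw [cs.wordProd_cons]
    have h := cs.length_mul_mod_two (cs.simple i) (cs.wordProd ω)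
    rw [cs.length_simple] at h
    simp only [List.length_cons]
    omega

theorem rsym_words (ω : List (Fin (n + 1))) :
    ∃ l : List W, (∀ x ∈ l, x ∈ Rsym cs) ∧
      l.prod = (if Even ω.length then cs.wordProd ω else cs.simple 0 * cs.wordProd ω) ∧
      l.length = (ω.filter (fun i => i ≠ 0)).length := by
  induction ω with
  | nil => exact ⟨[], by simp, by simp [cs.wordProd_nil], by simp⟩
  | cons i ω ih =>
    obtain ⟨l, hmem, hprod, hlen⟩ := ih
    have hlc : (i :: ω).length = ω.length + 1 := rfl
    by_cases hi : i = 0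
    · subst hi
      refine ⟨l, hmem, ?_, ?_⟩
      · rw [cs.wordProd_cons, hlc]
        by_cases he : Even ω.length
        · rw [if_pos he] at hprod
          rw [if_neg (by simp [Nat.even_add_one, he]), hprod,
            cs.simple_mul_simple_cancel_left]
        · rw [if_neg he] at hprod
          rw [if_pos (by simp [Nat.even_add_one, he]), hprod]
      · simp [hlen, List.filter_cons]
    · by_cases he : Even ω.length
      · rw [if_pos he] at hprod
        refine ⟨(cs.simple 0 * cs.simple i) :: l, ?_, ?_, ?_⟩
        · intro x hx
          rcases List.mem_cons.mp hx with rfl | hx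
          · exact Or.inl ⟨i, hi, rfl⟩
          · exact hmem x hx
        · rw [List.prod_cons, hprod, cs.wordProd_cons, hlc,
            if_neg (by simp [Nat.even_add_one, he]), mul_assoc]
        · rw [List.length_cons, hlen]
          simp [List.filter_cons, hi]
      · rw [if_neg he] at hprod
        refine ⟨(cs.simple i * cs.simple 0) :: l, ?_, ?_, ?_⟩
        · intro x hx
          rcases List.mem_cons.mp hx with rfl | hx
          · refine Or.inr ?_
            rw [Set.mem_inv, mul_inv_rev, cs.inv_simple, cs.inv_simple]
            exact ⟨i, hi, rfl⟩
          · exact hmem x hx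
        · rw [List.prod_cons, hprod, cs.wordProd_cons, hlc,
            if_pos (by simp [Nat.even_add_one, he])]
          rw [show cs.simple i * cs.simple 0 * (cs.simple 0 * cs.wordProd ω)
            = cs.simple i * (cs.simple 0 * (cs.simple 0 * cs.wordProd ω)) by group,
            cs.simple_mul_simple_cancel_left]
        · rw [List.length_cons, hlen]
          simp [List.filter_cons, hi]

theorem exists_rsym_word_of_even {w : W} (hw : Even (cs.length w)) (ω : List (Fin (n + 1)))
    (hπ : cs.wordProd ω = w) :
    ∃ l : List W, (∀ x ∈ l, x ∈ Rsym cs) ∧ l.prod = w ∧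
      l.length = (ω.filter (fun i => i ≠ 0)).length := by
  have he : Even ω.length := by
    have h := length_wordProd_mod_two cs ω
    rw [hπ] at h
    rw [Nat.even_iff] at hw ⊢
    omega
  obtain ⟨l, h1, h2, h3⟩ := rsym_words cs ω
  rw [if_pos he, hπ] at h2
  exact ⟨l, h1, h2, h3⟩

theorem exists_word_of_rsym (l : List W) (hmem : ∀ x ∈ l, x ∈ Rsym cs) :
    ∃ ω : List (Fin (n + 1)), cs.wordProd ω = l.prod ∧
      (ω.filter (fun i => i ≠ 0)).length = l.length := by
  induction l with
  | nil => exact ⟨[], by simp [cs.wordProd_nil], by simp⟩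
  | cons x l ih =>
    obtain ⟨ω, hπ, hcnt⟩ := ih (fun y hy => hmem y (List.mem_cons_of_mem x hy))
    have hx := hmem x (List.mem_cons_self (a := x) (l := l))
    rcases hx with ⟨i, hi, rfl⟩ | hxi
    · refine ⟨0 :: i :: ω, ?_, ?_⟩
      · rw [cs.wordProd_cons, cs.wordProd_cons, hπ, List.prod_cons, mul_assoc]
      · have hcnt2 : (List.filter (fun i => !decide (i = 0)) ω).length = l.length := by
          simpa using hcnt
        simp [List.filter_cons, hi, hcnt2]
    · rw [Set.mem_inv] at hxi
      obtain ⟨i, hi, hxeq⟩ := hxi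
      have hxx : x = cs.simple i * cs.simple 0 := by
        have : x⁻¹⁻¹ = (cs.simple 0 * cs.simple i)⁻¹ := by rw [hxeq]
        rwa [inv_inv, mul_inv_rev, cs.inv_simple, cs.inv_simple] at this
      refine ⟨i :: 0 :: ω, ?_, ?_⟩
      · rw [cs.wordProd_cons, cs.wordProd_cons, hπ, List.prod_cons, hxx, mul_assoc]
      · have hcnt2 : (List.filter (fun i => !decide (i = 0)) ω).length = l.length := by
          simpa using hcnt
        simp [List.filter_cons, hi, hcnt2]

theorem glen_le (A : Set W) (w : W) (l : List W) (h1 : ∀ x ∈ l, x ∈ A) (h2 : l.prod = w) :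
    glen A w ≤ l.length :=
  Nat.sInf_le ⟨l, h1, h2, rfl⟩

theorem glen_eq_nu {w : W} (hw : Even (cs.length w)) : glen (Rsym cs) w = nu cs w := by
  obtain ⟨ω, hπ, hcnt⟩ := nu_spec cs w
  obtain ⟨l, h1, h2, h3⟩ := exists_rsym_word_of_even cs hw ω hπ
  apply le_antisymm
  · calc glen (Rsym cs) w ≤ l.length := glen_le (Rsym cs) w l h1 h2
      _ = nu cs w := by rw [h3, hcnt]
  · have hne : Set.Nonempty {k | ∃ l' : List W, (∀ x ∈ l', x ∈ Rsym cs) ∧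
        l'.prod = w ∧ l'.length = k} := ⟨l.length, l, h1, h2, rfl⟩
    obtain ⟨l₀, g1, g2, g3⟩ := Nat.sInf_mem hne
    obtain ⟨ω₀, p1, p2⟩ := exists_word_of_rsym cs l₀ g1
    rw [g2] at p1
    calc nu cs w ≤ (ω₀.filter (fun i => i ≠ 0)).length := nu_le cs w ω₀ p1
      _ = l₀.length := p2
      _ = glen (Rsym cs) w := g3

/-- If `w < w'` in the strong Bruhat order on `W` then `ν(w) ≤ ν(w')`; in
particular, for `w, w' ∈ W⁺`, `ℓ_{R ∪ R⁻¹}(w) ≤ ℓ_{R ∪ R⁻¹}(w')`. -/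
theorem statement6 :
    (∀ u w : W, bruhatLE cs u w → u ≠ w → nu cs u ≤ nu cs w) ∧
    (∀ u w : W, u ∈ alt cs → w ∈ alt cs → bruhatLE cs u w → u ≠ w →
      glen (Rsym cs) u ≤ glen (Rsym cs) w) := by
  constructor
  · intro u w h _
    exact nu_mono cs h
  · intro u w hu hw h _
    have hu' : Even (cs.length u) := hu
    have hw' : Even (cs.length w) := hw
    rw [glen_eq_nu cs hu', glen_eq_nu cs hw']
    exact nu_mono cs h

end AltCox
end

section
/- Let (W,S) be a Coxeter system with distinguished generator s_0, and let P(W^+) be the set of odd palindromes in W^+ with respect to R = {r_i = s_0 s_i}. Then P(W^+)·s_0 = T̂ = s_0·P(W^+); that is, w ∈ W^+ is a palindrome if and only if w s_0 (equivalently s_0 w) is a reflection conjugate to some s ∈ S \ {s_0}. -/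
open CoxeterSystem

namespace AltCox

variable {W : Type*} [Group W]

variable {n : ℕ} {M : CoxeterMatrix (Fin (n + 1))} (cs : CoxeterSystem M W)

section Aux

variable {W : Type*} [Group W] {n : ℕ} {M : CoxeterMatrix (Fin (n + 1))} (cs : CoxeterSystem M W)

private lemma rsym_char {x : W} (hx : x ∈ Rsym cs) :
    ∃ i : Fin (n + 1), i ≠ 0 ∧ (x = cs.simple 0 * cs.simple i ∨ x = cs.simple i * cs.simple 0) := by
  rcases hx with ⟨i, hi, hx⟩ | hx
  · exact ⟨i, hi, Or.inl hx⟩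
  · rw [Set.mem_inv] at hx
    obtain ⟨i, hi, hx⟩ := hx
    refine ⟨i, hi, Or.inr ?_⟩
    rw [← inv_inv x, hx]
    simp [mul_inv_rev, cs.inv_simple]

private lemma si_s0_mem_rsym {i : Fin (n + 1)} (hi : i ≠ 0) :
    cs.simple i * cs.simple 0 ∈ Rsym cs := by
  refine Or.inr (Set.mem_inv.mpr ?_)
  exact ⟨i, hi, by simp [mul_inv_rev, cs.inv_simple]⟩

private lemma conj0_eq_inv {x : W} (hx : x ∈ Rsym cs) :
    cs.simple 0 * x * cs.simple 0 = x⁻¹ := by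
  obtain ⟨i, hi, h | h⟩ := rsym_char cs hx <;> subst h <;>
    simp [mul_inv_rev, cs.inv_simple, mul_assoc, cs.simple_mul_simple_self]

private lemma inv_mem_rsym {x : W} (hx : x ∈ Rsym cs) : x⁻¹ ∈ Rsym cs := by
  obtain ⟨i, hi, h | h⟩ := rsym_char cs hx <;> subst h
  · simpa [mul_inv_rev, cs.inv_simple] using si_s0_mem_rsym cs hi
  · exact Or.inl ⟨i, hi, by simp [mul_inv_rev, cs.inv_simple]⟩

private lemma mul_s0 {x : W} (hx : x ∈ Rsym cs) :
    x * cs.simple 0 = cs.simple 0 * x⁻¹ := by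
  have h := conj0_eq_inv cs hx
  calc x * cs.simple 0 = cs.simple 0 * (cs.simple 0 * x * cs.simple 0) := by
        rw [← mul_assoc, ← mul_assoc, cs.simple_mul_simple_self, one_mul]
    _ = cs.simple 0 * x⁻¹ := by rw [h]

/-- Lemma A: conjugation by `s₀` preserves palindromes. -/
private lemma palin_conj0 {p : W} (hp : p ∈ Palin cs) :
    cs.simple 0 * p * cs.simple 0 ∈ Palin cs := by
  obtain ⟨l, hmem, hodd, hrev, hprod⟩ := hp
  refine ⟨l.map (·⁻¹), ?_, by simpa using hodd, ?_, ?_⟩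
  · intro x hx
    simp only [List.mem_map] at hx
    obtain ⟨a, ha, rfl⟩ := hx
    exact inv_mem_rsym cs (hmem a ha)
  · rw [← List.map_reverse, hrev]
  · subst hprod
    clear hodd hrev
    induction l with
    | nil => simp [cs.simple_mul_simple_self]
    | cons a t ih =>
      have ha : a ∈ Rsym cs := hmem a List.mem_cons_self
      have ht : ∀ x ∈ t, x ∈ Rsym cs := fun x hx => hmem x (List.mem_cons_of_mem _ hx)
      simp only [List.map_cons, List.prod_cons]
      rw [← conj0_eq_inv cs ha, ih ht]
      simp [mul_assoc, cs.simple_mul_simple_self]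

/-- Lemma B: `r * p * r` is a palindrome for `r ∈ Rsym`, `p ∈ Palin`. -/
private lemma palin_conj_r {p r : W} (hr : r ∈ Rsym cs) (hp : p ∈ Palin cs) :
    r * p * r ∈ Palin cs := by
  obtain ⟨l, hmem, hodd, hrev, hprod⟩ := hp
  refine ⟨r :: l ++ [r], ?_, ?_, ?_, ?_⟩
  · intro x hx
    rcases List.mem_cons.mp hx with rfl | hx
    · exact hr
    rcases List.mem_append.mp hx with hx | hx
    · exact hmem x hx
    · rw [List.mem_singleton] at hx; subst hx; exact hr
  · obtain ⟨k, hk⟩ := hodd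
    exact ⟨k + 1, by simp; omega⟩
  · simp [hrev]
  · simp [hprod, mul_assoc]

/-- Forward direction: `p ∈ Palin → p * s₀ ∈ That`. -/
private lemma palin_mul_s0_mem_that {p : W} (hp : p ∈ Palin cs) :
    p * cs.simple 0 ∈ That cs := by
  obtain ⟨l, hmem, hodd, hrev, hprod⟩ := hp
  subst hprod
  suffices H : ∀ k (l : List W), l.length = k → (∀ x ∈ l, x ∈ Rsym cs) → Odd l.length →
      l.reverse = l → l.prod * cs.simple 0 ∈ That cs from
    H l.length l rfl hmem hodd hrev
  clear hmem hodd hrev l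
  intro k
  induction k using Nat.strong_induction_on with
  | _ k ih =>
  intro l hk hmem hodd hrev
  match l, hodd with
  | [a], _ =>
    have ha : a ∈ Rsym cs := hmem a List.mem_cons_self
    obtain ⟨i, hi, h | h⟩ := rsym_char cs ha <;> subst h
    · exact ⟨cs.simple 0, i, hi, by simp [mul_assoc, cs.inv_simple]⟩
    · exact ⟨1, i, hi, by simp [mul_assoc, cs.simple_mul_simple_self]⟩
  | a :: b :: t, hodd =>
    have hne : (b :: t) ≠ [] := by simp
    set m := (b :: t).dropLast with hm
    obtain ⟨c, hc⟩ : ∃ c, b :: t = m ++ [c] := ⟨_, (List.dropLast_append_getLast hne).symm⟩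
    have hl : a :: b :: t = a :: (m ++ [c]) := by rw [hc]
    have hrev2 : c :: (m.reverse ++ [a]) = a :: (m ++ [c]) := by
      have h0 := hrev
      rw [hl] at h0
      simpa [List.reverse_cons, List.reverse_append] using h0
    obtain ⟨hca, h4⟩ := List.cons_eq_cons.mp hrev2
    rw [hca] at h4 hc hl
    have hrevm : m.reverse = m := List.append_cancel_right h4
    have hmemm : ∀ x ∈ m, x ∈ Rsym cs := by
      intro x hx
      apply hmem
      rw [hl]
      simp [hx]
    have hlenm : m.length + 2 = (a :: b :: t).length := by
      have := congrArg List.length hl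
      simp at this
      simp
      omega
    have hoddm : Odd m.length := by
      obtain ⟨d, hd⟩ := hodd
      exact ⟨d - 1, by omega⟩
    have hIH := ih m.length (by omega) m rfl hmemm hoddm hrevm
    obtain ⟨w, i, hi, hwi⟩ := hIH
    have ha : a ∈ Rsym cs := hmem a List.mem_cons_self
    refine ⟨a * w, i, hi, ?_⟩
    have hlp : (a :: b :: t).prod = a * m.prod * a := by
      rw [hl]; simp [mul_assoc]
    rw [hlp, mul_assoc (a * m.prod) a, mul_s0 cs ha, ← mul_assoc,
      mul_assoc a m.prod, hwi]
    group

/-- Reverse direction core. -/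
private lemma conj_simple_mul_s0_mem_palin (ω : List (Fin (n + 1))) {i : Fin (n + 1)}
    (hi : i ≠ 0) :
    cs.wordProd ω * cs.simple i * (cs.wordProd ω)⁻¹ * cs.simple 0 ∈ Palin cs := by
  induction ω with
  | nil =>
    refine ⟨[cs.simple i * cs.simple 0], ?_, ⟨0, rfl⟩, rfl, by simp [cs.wordProd_nil, mul_assoc]⟩
    intro x hx
    rw [List.mem_singleton] at hx
    subst hx
    exact si_s0_mem_rsym cs hi
  | cons j ω' ihq =>
    set w' := cs.wordProd ω' with hw'
    set q := w' * cs.simple i * w'⁻¹ * cs.simple 0 with hq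
    have hqP : q ∈ Palin cs := ihq
    have key : cs.wordProd (j :: ω') * cs.simple i * (cs.wordProd (j :: ω'))⁻¹ * cs.simple 0
        = cs.simple j * q * cs.simple 0 * cs.simple j * cs.simple 0 := by
      rw [cs.wordProd_cons, hq]
      simp [mul_inv_rev, cs.inv_simple, mul_assoc, cs.simple_mul_simple_self]
      rfl
    rw [key]
    by_cases hj : j = 0
    · subst hj
      have heq : cs.simple 0 * q * cs.simple 0 * cs.simple 0 * cs.simple 0
          = cs.simple 0 * q * cs.simple 0 := by
        simp [mul_assoc, cs.simple_mul_simple_self]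
      rw [heq]
      exact palin_conj0 cs hqP
    · have hr : cs.simple j * cs.simple 0 ∈ Rsym cs := si_s0_mem_rsym cs hj
      have heq : cs.simple j * q * cs.simple 0 * cs.simple j * cs.simple 0
          = (cs.simple j * cs.simple 0) * (cs.simple 0 * q * cs.simple 0) *
            (cs.simple j * cs.simple 0) := by
        simp [mul_assoc, cs.simple_mul_simple_self]
      rw [heq]
      exact palin_conj_r cs hr (palin_conj0 cs hqP)

private lemma that_mul_s0_mem_palin {t : W} (ht : t ∈ That cs) :
    t * cs.simple 0 ∈ Palin cs := by
  obtain ⟨w, i, hi, rfl⟩ := ht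
  obtain ⟨ω, rfl⟩ := cs.wordProd_surjective w
  exact conj_simple_mul_s0_mem_palin cs ω hi

end Aux

/-- `P(W⁺) s₀ = T̂ = s₀ P(W⁺)`: an element `w ∈ W⁺` is an odd palindrome with
respect to `R` if and only if `w s₀` (equivalently `s₀ w`) is a reflection
conjugate to some simple reflection other than `s₀`. -/
theorem statement9 :
    ((fun p => p * cs.simple 0) '' Palin cs = That cs) ∧
    ((fun p => cs.simple 0 * p) '' Palin cs = That cs) ∧
    (∀ w ∈ alt cs, (w ∈ Palin cs ↔ w * cs.simple 0 ∈ That cs)) ∧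
    (∀ w ∈ alt cs, (w ∈ Palin cs ↔ cs.simple 0 * w ∈ That cs)) := by
  have s0sq : cs.simple 0 * cs.simple 0 = 1 := cs.simple_mul_simple_self 0
  have fwd : ∀ p ∈ Palin cs, p * cs.simple 0 ∈ That cs := fun p hp =>
    palin_mul_s0_mem_that cs hp
  have fwdL : ∀ p ∈ Palin cs, cs.simple 0 * p ∈ That cs := by
    intro p hp
    have h := fwd _ (palin_conj0 cs hp)
    have : cs.simple 0 * p * cs.simple 0 * cs.simple 0 = cs.simple 0 * p := by
      rw [mul_assoc, s0sq, mul_one]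
    rwa [this] at h
  have bwd : ∀ t ∈ That cs, t * cs.simple 0 ∈ Palin cs := fun t ht =>
    that_mul_s0_mem_palin cs ht
  have h1 : (fun p => p * cs.simple 0) '' Palin cs = That cs := by
    ext t
    constructor
    · rintro ⟨p, hp, rfl⟩
      exact fwd p hp
    · intro ht
      refine ⟨t * cs.simple 0, bwd t ht, ?_⟩
      simp [mul_assoc, s0sq]
  have h2 : (fun p => cs.simple 0 * p) '' Palin cs = That cs := by
    ext t
    constructor
    · rintro ⟨p, hp, rfl⟩
      exact fwdL p hp
    · intro ht
      refine ⟨cs.simple 0 * t, ?_, ?_⟩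
      · have := palin_conj0 cs (bwd t ht)
        have he : cs.simple 0 * (t * cs.simple 0) * cs.simple 0 = cs.simple 0 * t := by
          simp [mul_assoc, s0sq]
        rwa [he] at this
      · simp [← mul_assoc, s0sq]
  refine ⟨h1, h2, ?_, ?_⟩
  · intro w _
    constructor
    · exact fwd w
    · intro ht
      have := bwd _ ht
      have he : w * cs.simple 0 * cs.simple 0 = w := by simp [mul_assoc, s0sq]
      rwa [he] at this
  · intro w _
    constructor
    · exact fwdL w
    · intro ht
      have h := palin_conj0 cs (bwd _ ht)
      have he : cs.simple 0 * (cs.simple 0 * w * cs.simple 0) * cs.simple 0 = w := by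
        rw [show cs.simple 0 * (cs.simple 0 * w * cs.simple 0) * cs.simple 0
            = (cs.simple 0 * cs.simple 0) * w * (cs.simple 0 * cs.simple 0) by group,
          s0sq, one_mul, mul_one]
      rwa [he] at h


end AltCox
end
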